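/- Let a ∈ ℝ, b > 0, c = a/b, c₀ < 0 with d = c₀ − c ≠ 0, and let ρ(x,t) = ρ¹(x,t) + ρ²(x,t) + ρ³(x,t) be the explicit solution defined below. Then for every k ∈ ℕ and t > 0, ∫_k^{k+1} ρ(x,t) dx = ((c₀−c)/d)·(Φ((k+1−at)/σ) − Φ((k−at)/σ)) − e^{c₀(c₀b−a)t} e^{c₀k} (e^{c₀} Φ(((2c₀b−a)t + k+1)/σ) − Φ(((2c₀b−a)t + k)/σ)) + (c₀/d) e^{d(db+a)t} e^{−dk} (e^{−d} Φ(((2db+a)t − (k+1))/σ) − Φ(((2db+a)t − k)/σ)) − e^{ck} (e^{c} Φ(−(k+1+at)/σ) − Φ(−(k+at)/σ)) − (c/d) e^{c₀(c₀b−a)t} e^{−dk} (e^{−d} Φ(((2c₀b−a)t − (k+1))/σ) − Φ(((2c₀b−a)t − k)/σ)). -/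

import Mathlib

open MeasureTheory Set Filter Topology

/-- The standard normal cumulative distribution function `Φ`. -/
noncomputable def stdNormalCdf (z : ℝ) : ℝ :=
  ∫ x in Iic z, (Real.sqrt (2 * Real.pi))⁻¹ * Real.exp (-x ^ 2 / 2)

/-- First part `ρ¹` of the explicit solution (with `c = a/b`, `σ = √(2bt)`). -/
noncomputable def explRho1 (a b c₀ : ℝ) (x t : ℝ) : ℝ :=
  -c₀ * Real.exp (c₀ * (c₀ * b * t + x - a * t)) *
    stdNormalCdf ((2 * c₀ * b * t + x - a * t) / Real.sqrt (2 * b * t))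

/-- Second part `ρ²` of the explicit solution (with `d = c₀ − a/b`). -/
noncomputable def explRho2 (a b c₀ : ℝ) (x t : ℝ) : ℝ :=
  -c₀ * Real.exp ((c₀ - a / b) * ((c₀ - a / b) * b * t - x + a * t)) *
    stdNormalCdf ((2 * (c₀ - a / b) * b * t - x + a * t) / Real.sqrt (2 * b * t))

/-- Third part `ρ³` of the explicit solution (with `c = a/b`). -/
noncomputable def explRho3 (a b c₀ : ℝ) (x t : ℝ) : ℝ :=
  -(a / b) * Real.exp ((a / b) * x) *
      stdNormalCdf (-(x + a * t) / Real.sqrt (2 * b * t))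
  + (a / b) * Real.exp ((a / b) * x) * Real.exp (c₀ * (c₀ * b * t - x - a * t)) *
      stdNormalCdf ((2 * c₀ * b * t - x - a * t) / Real.sqrt (2 * b * t))

/-- The explicit solution `ρ = ρ¹ + ρ² + ρ³` of the Smoluchowski equation on the
half-line with exponential initial datum `ρ₀(x) = −c₀ e^{c₀ x}`. -/
noncomputable def explRho (a b c₀ : ℝ) (x t : ℝ) : ℝ :=
  explRho1 a b c₀ x t + explRho2 a b c₀ x t + explRho3 a b c₀ x t

noncomputable def gaussPdf (z : ℝ) : ℝ := (Real.sqrt (2 * Real.pi))⁻¹ * Real.exp (-z ^ 2 / 2)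

lemma gaussPdf_cont : Continuous gaussPdf := by
  unfold gaussPdf; fun_prop

lemma gaussPdf_integrable : Integrable gaussPdf := by
  unfold gaussPdf
  have h : Integrable (fun x : ℝ => Real.exp (-(1/2 : ℝ) * x ^ 2)) :=
    integrable_exp_neg_mul_sq (by norm_num)
  have heq : (fun x : ℝ => Real.exp (-(1/2 : ℝ) * x ^ 2))
      = fun x : ℝ => Real.exp (-x ^ 2 / 2) := by
    funext x; ring_nf
  rw [heq] at h
  exact h.const_mul _

lemma hasDerivAt_stdNormalCdf (z : ℝ) : HasDerivAt stdNormalCdf (gaussPdf z) z := by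
  have heq : stdNormalCdf = fun u => stdNormalCdf 0 + ∫ x in (0:ℝ)..u, gaussPdf x := by
    funext u
    have h := intervalIntegral.integral_Iic_sub_Iic (a := (0:ℝ)) (b := u)
      gaussPdf_integrable.integrableOn gaussPdf_integrable.integrableOn
    unfold stdNormalCdf
    unfold gaussPdf at h ⊢
    linarith
  rw [heq]
  exact (intervalIntegral.integral_hasDerivAt_right
    (gaussPdf_cont.intervalIntegrable 0 z)
    (gaussPdf_cont.stronglyMeasurableAtFilter _ _)
    gaussPdf_cont.continuousAt).const_add _

lemma stdNormalCdf_cont : Continuous stdNormalCdf := by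
  have h : Differentiable ℝ stdNormalCdf := fun z => (hasDerivAt_stdNormalCdf z).differentiableAt
  exact h.continuous

lemma hasDerivAt_term (K α m ε σ x : ℝ) :
    HasDerivAt (fun y => K * (Real.exp (α * y) * stdNormalCdf ((m + ε * y) / σ)))
      (K * (α * Real.exp (α * x) * stdNormalCdf ((m + ε * x) / σ))
        + K * (Real.exp (α * x) * (gaussPdf ((m + ε * x) / σ) * (ε / σ)))) x := by
  have hlin : HasDerivAt (fun y : ℝ => (m + ε * y) / σ) (ε / σ) x := by
    have h1 : HasDerivAt (fun y : ℝ => m + ε * y) ε x := by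
      simpa using ((hasDerivAt_id x).const_mul ε).const_add m
    simpa using h1.div_const σ
  have hΦ : HasDerivAt (fun y => stdNormalCdf ((m + ε * y) / σ))
      (gaussPdf ((m + ε * x) / σ) * (ε / σ)) x :=
    (hasDerivAt_stdNormalCdf _).comp x hlin
  have hexp : HasDerivAt (fun y : ℝ => Real.exp (α * y)) (Real.exp (α * x) * α) x :=
    HasDerivAt.exp (by simpa using (hasDerivAt_id x).const_mul α)
  have h : HasDerivAt (fun y => K * (Real.exp (α * y) * stdNormalCdf ((m + ε * y) / σ)))
      (K * (Real.exp (α * x) * α * stdNormalCdf ((m + ε * x) / σ)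
        + Real.exp (α * x) * (gaussPdf ((m + ε * x) / σ) * (ε / σ)))) x :=
    (hexp.mul hΦ).const_mul K
  convert h using 1
  ring

attribute [fun_prop] stdNormalCdf_cont

lemma gauss_shift (p q z w : ℝ) (h : p + q + -z ^ 2 / 2 = -w ^ 2 / 2) :
    Real.exp p * Real.exp q * gaussPdf z = gaussPdf w := by
  unfold gaussPdf
  rw [show Real.exp p * Real.exp q * ((Real.sqrt (2 * Real.pi))⁻¹ * Real.exp (-z ^ 2 / 2))
      = (Real.sqrt (2 * Real.pi))⁻¹ * Real.exp (p + (q + -z ^ 2 / 2)) from by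
    rw [Real.exp_add, Real.exp_add]; ring]
  rw [show p + (q + -z ^ 2 / 2) = -w ^ 2 / 2 from by linarith]

lemma gauss_shift' (p q r z w : ℝ) (h : p + q + -z ^ 2 / 2 = r + -w ^ 2 / 2) :
    Real.exp p * Real.exp q * gaussPdf z = Real.exp r * gaussPdf w := by
  unfold gaussPdf
  rw [show Real.exp p * Real.exp q * ((Real.sqrt (2 * Real.pi))⁻¹ * Real.exp (-z ^ 2 / 2))
      = (Real.sqrt (2 * Real.pi))⁻¹ * Real.exp (p + (q + -z ^ 2 / 2)) from by
    rw [Real.exp_add, Real.exp_add]; ring,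
    show Real.exp r * ((Real.sqrt (2 * Real.pi))⁻¹ * Real.exp (-w ^ 2 / 2))
      = (Real.sqrt (2 * Real.pi))⁻¹ * Real.exp (r + -w ^ 2 / 2) from by
    rw [Real.exp_add]; ring]
  rw [show p + (q + -z ^ 2 / 2) = r + -w ^ 2 / 2 from by linarith]

set_option maxHeartbeats 2000000 in
/-- Closed-form expression for the cell masses `∫_k^{k+1} ρ(x,t) dx` of the
explicit solution: the continuous approximation `p_k^A(t)`. -/
theorem stmt_13 (a b c₀ : ℝ) (hb : 0 < b) (hc₀ : c₀ < 0)
    (c d : ℝ) (hc : c = a / b) (hd : d = c₀ - c) (hd0 : d ≠ 0) :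
    ∀ k : ℕ, ∀ t > (0:ℝ),
      (∫ x in (k : ℝ)..((k : ℝ) + 1), explRho a b c₀ x t)
        = (c₀ - c) / d *
            (stdNormalCdf (((k : ℝ) + 1 - a * t) / Real.sqrt (2 * b * t))
              - stdNormalCdf (((k : ℝ) - a * t) / Real.sqrt (2 * b * t)))
        - Real.exp (c₀ * (c₀ * b - a) * t) * Real.exp (c₀ * (k : ℝ)) *
            (Real.exp c₀ *
                stdNormalCdf (((2 * c₀ * b - a) * t + ((k : ℝ) + 1)) / Real.sqrt (2 * b * t))
              - stdNormalCdf (((2 * c₀ * b - a) * t + (k : ℝ)) / Real.sqrt (2 * b * t)))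
        + c₀ / d * Real.exp (d * (d * b + a) * t) * Real.exp (-d * (k : ℝ)) *
            (Real.exp (-d) *
                stdNormalCdf (((2 * d * b + a) * t - ((k : ℝ) + 1)) / Real.sqrt (2 * b * t))
              - stdNormalCdf (((2 * d * b + a) * t - (k : ℝ)) / Real.sqrt (2 * b * t)))
        - Real.exp (c * (k : ℝ)) *
            (Real.exp c *
                stdNormalCdf (-(((k : ℝ) + 1) + a * t) / Real.sqrt (2 * b * t))
              - stdNormalCdf (-((k : ℝ) + a * t) / Real.sqrt (2 * b * t)))
        - c / d * Real.exp (c₀ * (c₀ * b - a) * t) * Real.exp (-d * (k : ℝ)) *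
            (Real.exp (-d) *
                stdNormalCdf (((2 * c₀ * b - a) * t - ((k : ℝ) + 1)) / Real.sqrt (2 * b * t))
              - stdNormalCdf (((2 * c₀ * b - a) * t - (k : ℝ)) / Real.sqrt (2 * b * t))) := by
  subst hd; subst hc
  intro k t ht
  set σ := Real.sqrt (2 * b * t) with hσdef
  have hσpos : 0 < σ := Real.sqrt_pos.mpr (by positivity)
  have hσ2 : σ ^ 2 = 2 * b * t := Real.sq_sqrt (by positivity)
  have h2bt : (2 * b * t) ≠ 0 := by positivity
  have hbne : b ≠ 0 := ne_of_gt hb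
  have htne : t ≠ 0 := ne_of_gt ht
  have key : ∀ x : ℝ, HasDerivAt (fun y : ℝ =>
      stdNormalCdf ((y - a * t) / σ)
      + (-Real.exp (c₀ * (c₀ * b - a) * t)) *
          (Real.exp (c₀ * y) * stdNormalCdf (((2 * c₀ * b - a) * t + 1 * y) / σ))
      + (c₀ / (c₀ - a / b) * Real.exp ((c₀ - a / b) * ((c₀ - a / b) * b + a) * t)) *
          (Real.exp (-(c₀ - a / b) * y) *
            stdNormalCdf (((2 * (c₀ - a / b) * b + a) * t + (-1) * y) / σ))
      + (-1 : ℝ) *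
          (Real.exp (a / b * y) * stdNormalCdf ((-(a * t) + (-1) * y) / σ))
      + (-(a / b / (c₀ - a / b)) * Real.exp (c₀ * (c₀ * b - a) * t)) *
          (Real.exp (-(c₀ - a / b) * y) *
            stdNormalCdf (((2 * c₀ * b - a) * t + (-1) * y) / σ)))
      (explRho a b c₀ x t) x := by
    intro x
    have e1 : Real.exp (c₀ * (c₀ * b - a) * t) * Real.exp (c₀ * x) *
        gaussPdf (((2 * c₀ * b - a) * t + 1 * x) / σ) = gaussPdf ((x - a * t) / σ) := by
      apply gauss_shift
      rw [div_pow, div_pow, hσ2]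
      field_simp
      ring
    have e2 : Real.exp ((c₀ - a / b) * ((c₀ - a / b) * b + a) * t) *
        Real.exp (-(c₀ - a / b) * x) *
        gaussPdf (((2 * (c₀ - a / b) * b + a) * t + (-1) * x) / σ)
        = Real.exp (a / b * x) * gaussPdf ((-(a * t) + (-1) * x) / σ) := by
      apply gauss_shift'
      rw [div_pow, div_pow, hσ2]
      field_simp
      ring
    have e3 : Real.exp (c₀ * (c₀ * b - a) * t) * Real.exp (-(c₀ - a / b) * x) *
        gaussPdf (((2 * c₀ * b - a) * t + (-1) * x) / σ)
        = Real.exp (a / b * x) * gaussPdf ((-(a * t) + (-1) * x) / σ) := by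
      apply gauss_shift'
      rw [div_pow, div_pow, hσ2]
      field_simp
      ring
    have hdd : (c₀ - a / b) * (c₀ - a / b)⁻¹ = 1 := mul_inv_cancel₀ hd0
    have hinv : Real.exp (a / b * x) * Real.exp (-(a / b * x)) = 1 := by
      rw [← Real.exp_add]; simp
    have h1 : HasDerivAt (fun y : ℝ => stdNormalCdf ((y - a * t) / σ))
        (gaussPdf ((x - a * t) / σ) * (1 / σ)) x := by
      have hlin : HasDerivAt (fun y : ℝ => (y - a * t) / σ) (1 / σ) x := by
        simpa using ((hasDerivAt_id x).sub_const (a * t)).div_const σ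
      exact (hasDerivAt_stdNormalCdf _).comp x hlin
    have h2 := hasDerivAt_term (-Real.exp (c₀ * (c₀ * b - a) * t)) c₀
      ((2 * c₀ * b - a) * t) 1 σ x
    have h3 := hasDerivAt_term
      (c₀ / (c₀ - a / b) * Real.exp ((c₀ - a / b) * ((c₀ - a / b) * b + a) * t))
      (-(c₀ - a / b)) ((2 * (c₀ - a / b) * b + a) * t) (-1) σ x
    have h4 := hasDerivAt_term (-1 : ℝ) (a / b) (-(a * t)) (-1) σ x
    have h5 := hasDerivAt_term (-(a / b / (c₀ - a / b)) * Real.exp (c₀ * (c₀ * b - a) * t))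
      (-(c₀ - a / b)) ((2 * c₀ * b - a) * t) (-1) σ x
    have H := (((h1.add h2).add h3).add h4).add h5
    have hval : explRho a b c₀ x t =
        gaussPdf ((x - a * t) / σ) * (1 / σ)
        + ((-Real.exp (c₀ * (c₀ * b - a) * t)) * (c₀ * Real.exp (c₀ * x) *
              stdNormalCdf (((2 * c₀ * b - a) * t + 1 * x) / σ))
          + (-Real.exp (c₀ * (c₀ * b - a) * t)) * (Real.exp (c₀ * x) *
              (gaussPdf (((2 * c₀ * b - a) * t + 1 * x) / σ) * (1 / σ))))
        + ((c₀ / (c₀ - a / b) * Real.exp ((c₀ - a / b) * ((c₀ - a / b) * b + a) * t)) *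
              ((-(c₀ - a / b)) * Real.exp (-(c₀ - a / b) * x) *
                stdNormalCdf (((2 * (c₀ - a / b) * b + a) * t + (-1) * x) / σ))
          + (c₀ / (c₀ - a / b) * Real.exp ((c₀ - a / b) * ((c₀ - a / b) * b + a) * t)) *
              (Real.exp (-(c₀ - a / b) * x) *
                (gaussPdf (((2 * (c₀ - a / b) * b + a) * t + (-1) * x) / σ) * ((-1) / σ))))
        + ((-1 : ℝ) * (a / b * Real.exp (a / b * x) *
              stdNormalCdf ((-(a * t) + (-1) * x) / σ))
          + (-1 : ℝ) * (Real.exp (a / b * x) *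
              (gaussPdf ((-(a * t) + (-1) * x) / σ) * ((-1) / σ))))
        + ((-(a / b / (c₀ - a / b)) * Real.exp (c₀ * (c₀ * b - a) * t)) *
              ((-(c₀ - a / b)) * Real.exp (-(c₀ - a / b) * x) *
                stdNormalCdf (((2 * c₀ * b - a) * t + (-1) * x) / σ))
          + (-(a / b / (c₀ - a / b)) * Real.exp (c₀ * (c₀ * b - a) * t)) *
              (Real.exp (-(c₀ - a / b) * x) *
                (gaussPdf (((2 * c₀ * b - a) * t + (-1) * x) / σ) * ((-1) / σ)))) := by
      unfold explRho explRho1 explRho2 explRho3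
      rw [← hσdef]
      rw [show c₀ * (c₀ * b * t + x - a * t) = c₀ * (c₀ * b - a) * t + c₀ * x from by ring]
      rw [show (2 * c₀ * b * t + x - a * t) / σ = ((2 * c₀ * b - a) * t + 1 * x) / σ from by
        ring_nf]
      rw [show (c₀ - a / b) * ((c₀ - a / b) * b * t - x + a * t)
          = (c₀ - a / b) * ((c₀ - a / b) * b + a) * t + -(c₀ - a / b) * x from by ring]
      rw [show (2 * (c₀ - a / b) * b * t - x + a * t) / σ
          = ((2 * (c₀ - a / b) * b + a) * t + (-1) * x) / σ from by ring_nf]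
      rw [show -(x + a * t) / σ = (-(a * t) + (-1) * x) / σ from by ring_nf]
      rw [show (2 * c₀ * b * t - x - a * t) / σ
          = ((2 * c₀ * b - a) * t + (-1) * x) / σ from by ring_nf]
      rw [show c₀ * (c₀ * b * t - x - a * t)
          = c₀ * (c₀ * b - a) * t + -(c₀ - a / b) * x + -(a / b * x) from by ring]
      simp only [Real.exp_add]
      linear_combination (1 / σ) * e1 + (c₀ / (c₀ - a / b) / σ) * e2
        + (-(a / b / (c₀ - a / b)) / σ) * e3
        + (c₀ * Real.exp ((c₀ - a / b) * ((c₀ - a / b) * b + a) * t)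
            * Real.exp (-(c₀ - a / b) * x)
            * stdNormalCdf (((2 * (c₀ - a / b) * b + a) * t + (-1) * x) / σ)
          - a / b * Real.exp (c₀ * (c₀ * b - a) * t) * Real.exp (-(c₀ - a / b) * x)
            * stdNormalCdf (((2 * c₀ * b - a) * t + (-1) * x) / σ)
          + Real.exp (a / b * x) * gaussPdf ((-(a * t) + (-1) * x) / σ) / σ) * hdd
        + (a / b * Real.exp (c₀ * (c₀ * b - a) * t) * Real.exp (-(c₀ - a / b) * x)
            * stdNormalCdf (((2 * c₀ * b - a) * t + (-1) * x) / σ)) * hinv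
    rw [hval]
    exact H
  have hcont : Continuous (fun y : ℝ => explRho a b c₀ y t) := by
    unfold explRho explRho1 explRho2 explRho3
    fun_prop
  have hInt : IntervalIntegrable (fun y : ℝ => explRho a b c₀ y t) volume (k : ℝ) ((k : ℝ) + 1) :=
    hcont.intervalIntegrable _ _
  rw [intervalIntegral.integral_eq_sub_of_hasDerivAt (fun y _ => key y) hInt]
  rw [div_self hd0]
  simp only [one_mul, neg_one_mul, ← sub_eq_add_neg]
  rw [show -(((k : ℝ) + 1) + a * t) = -(a * t) - ((k : ℝ) + 1) from by ring]
  rw [show -((k : ℝ) + a * t) = -(a * t) - (k : ℝ) from by ring]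
  rw [show c₀ * ((k : ℝ) + 1) = c₀ * (k : ℝ) + c₀ from by ring]
  rw [show -(c₀ - a / b) * ((k : ℝ) + 1) = -(c₀ - a / b) * (k : ℝ) + -(c₀ - a / b) from by ring]
  rw [show a / b * ((k : ℝ) + 1) = a / b * (k : ℝ) + a / b from by ring]
  simp only [Real.exp_add]
  ring
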